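/- Let n ≥ 1, let A, B : Fin n → Fin n → ℝ have all entries in [0.9, 1.1], let k ∈ Fin n and δ ≥ 0, and let G₁ be the associated (n+1)×(n+1) bimatrix game. Then every Nash equilibrium (x, y) of G₁ satisfies x(0) = 0 and y(0) = 0, and the restrictions x', y' of x and y to the last n strategies (x'(i) = x(i+1), y'(j) = y(j+1)) form a Nash equilibrium of the n×n game with payoff matrices (A, B). -/
import Mathlib


open Finset in
/-- Expected payoff Σ_{i,j} x(i)·M(i,j)·y(j) of the game matrix M under mixed
strategies x (row) and y (column). -/
def payoff {m : ℕ} (M : Fin m → Fin m → ℝ) (x y : Fin m → ℝ) : ℝ :=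
  ∑ i, ∑ j, x i * M i j * y j

/-- (x,y) is a Nash equilibrium of the bimatrix game with row payoff matrix R and
column payoff matrix C. -/
def NashEq {m : ℕ} (R C : Fin m → Fin m → ℝ) (x y : Fin m → ℝ) : Prop :=
  x ∈ stdSimplex ℝ (Fin m) ∧ y ∈ stdSimplex ℝ (Fin m) ∧
  (∀ x' ∈ stdSimplex ℝ (Fin m), payoff R x' y ≤ payoff R x y) ∧
  (∀ y' ∈ stdSimplex ℝ (Fin m), payoff C x y' ≤ payoff C x y)

/-- Row payoff matrix R₁ of the game G₁: R₁(0,j) = 0, R₁(i+1,0) = −1,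
R₁(i+1,j+1) = A(i,j). -/
def R1 {n : ℕ} (A : Fin n → Fin n → ℝ) (i j : Fin (n + 1)) : ℝ :=
  Fin.cases 0 (fun i' => Fin.cases (-1) (fun j' => A i' j') j) i

/-- Column payoff matrix C₁ of the game G₁: C₁(0,0) = −1, C₁(0,j+1) = 3/4 + δ if j = k
and 3/4 otherwise, C₁(i+1,0) = 3/4, C₁(i+1,j+1) = B(i,j). -/
noncomputable def C1 {n : ℕ} (B : Fin n → Fin n → ℝ) (k : Fin n) (δ : ℝ) (i j : Fin (n + 1)) : ℝ :=
  Fin.cases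
    (Fin.cases (-1) (fun j' => if j' = k then 3 / 4 + δ else 3 / 4) j)
    (fun i' => Fin.cases (3 / 4) (fun j' => B i' j') j) i

/-- Row payoff matrix R₀ of the game G₀: payoff 1 on row 0, payoff 0 elsewhere. -/
noncomputable def R0 {n : ℕ} (i _j : Fin (n + 1)) : ℝ := if i = 0 then 1 else 0

/-- Column payoff matrix C₀ of the game G₀: payoff 1 on column 0, payoff 0 elsewhere. -/
noncomputable def C0 {n : ℕ} (_i j : Fin (n + 1)) : ℝ := if j = 0 then 1 else 0

open Finset

lemma payoff_col {m : ℕ} (M : Fin m → Fin m → ℝ) (x y : Fin m → ℝ) :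
    payoff M x y = ∑ j, (∑ i, x i * M i j) * y j := by
  rw [payoff, Finset.sum_comm]
  simp [Finset.sum_mul]

lemma payoff_row {m : ℕ} (M : Fin m → Fin m → ℝ) (x y : Fin m → ℝ) :
    payoff M x y = ∑ i, x i * (∑ j, M i j * y j) := by
  rw [payoff]
  refine Finset.sum_congr rfl fun i _ => ?_
  rw [Finset.mul_sum]
  refine Finset.sum_congr rfl fun j _ => ?_
  ring

lemma payoff_restrict {n : ℕ} (M : Fin (n+1) → Fin (n+1) → ℝ) (u v : Fin (n+1) → ℝ)
    (hu : u 0 = 0) (hv : v 0 = 0) :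
    payoff M u v
      = payoff (fun i j : Fin n => M i.succ j.succ) (fun i => u i.succ) (fun j => v j.succ) := by
  simp [payoff, Fin.sum_univ_succ, hu, hv]

lemma R1_succ_succ {n : ℕ} (A : Fin n → Fin n → ℝ) :
    (fun i j : Fin n => R1 A i.succ j.succ) = A := by
  funext i j; simp [R1]

lemma C1_succ_succ {n : ℕ} (B : Fin n → Fin n → ℝ) (k : Fin n) (δ : ℝ) :
    (fun i j : Fin n => C1 B k δ i.succ j.succ) = B := by
  funext i j; simp [C1]

/-- in every Nash equilibrium of G₁ both players shun their 0-th strategy,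
and the restriction to the remaining n strategies is a Nash equilibrium of (A,B). -/
theorem nashEq_G1 (n : ℕ) (hn : 1 ≤ n) (A B : Fin n → Fin n → ℝ)
    (hA : ∀ i j, A i j ∈ Set.Icc (0.9 : ℝ) 1.1)
    (hB : ∀ i j, B i j ∈ Set.Icc (0.9 : ℝ) 1.1)
    (k : Fin n) (δ : ℝ) (hδ : 0 ≤ δ)
    (x y : Fin (n + 1) → ℝ)
    (hNE : NashEq (R1 A) (C1 B k δ) x y) :
    x 0 = 0 ∧ y 0 = 0 ∧
      NashEq A B (fun i : Fin n => x i.succ) (fun j : Fin n => y j.succ) := by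
  obtain ⟨⟨hx0, hxs⟩, ⟨hy0, hys⟩, hRmax, hCmax⟩ := hNE
  have hxsum : x 0 + ∑ i : Fin n, x i.succ = 1 := by
    rw [← hxs, Fin.sum_univ_succ]
  have hysum : y 0 + ∑ j : Fin n, y j.succ = 1 := by
    rw [← hys, Fin.sum_univ_succ]
  have hk0 : (0 : Fin (n+1)) ≠ k.succ := (Fin.succ_ne_zero k).symm
  -- column payoffs
  set S : Fin (n+1) → ℝ := fun j => ∑ i, x i * C1 B k δ i j with hSdef
  -- Step 1 : y 0 = 0
  set y' : Fin (n+1) → ℝ :=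
    fun j => y j + (if j = k.succ then y 0 else 0) - (if j = 0 then y 0 else 0) with hy'def
  have hy'mem : y' ∈ stdSimplex ℝ (Fin (n+1)) := by
    constructor
    · intro j
      rcases eq_or_ne j 0 with h0 | h0
      · subst h0; simp [hy'def, hk0]
      · rcases eq_or_ne j k.succ with h1 | h1
        · subst h1
          simp [hy'def, h0]
          linarith [hy0 k.succ, hy0 0]
        · simpa [hy'def, h0, h1] using hy0 j
    · simp only [hy'def, Finset.sum_sub_distrib, Finset.sum_add_distrib,
        Finset.sum_ite_eq', Finset.mem_univ, if_true]
      linarith [hys]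
  have hdev := hCmax y' hy'mem
  rw [payoff_col, payoff_col] at hdev
  have hexp : ∑ j, (∑ i, x i * C1 B k δ i j) * y' j
      = (∑ j, (∑ i, x i * C1 B k δ i j) * y j) + S k.succ * y 0 - S 0 * y 0 := by
    simp only [hy'def, mul_add, mul_sub, mul_ite, mul_zero,
      Finset.sum_add_distrib, Finset.sum_sub_distrib,
      Finset.sum_ite_eq', Finset.mem_univ, if_true, hSdef]
  rw [hexp] at hdev
  have hS0 : S 0 = x 0 * (-1) + ∑ i : Fin n, x i.succ * (3/4 : ℝ) := by
    simp [hSdef, C1, Fin.sum_univ_succ]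
  have hSk : S k.succ = x 0 * (3/4 + δ) + ∑ i : Fin n, x i.succ * B i k := by
    simp [hSdef, C1, Fin.sum_univ_succ]
  have hBsum : ∑ i : Fin n, x i.succ * (0.9:ℝ) ≤ ∑ i : Fin n, x i.succ * B i k :=
    Finset.sum_le_sum fun i _ => mul_le_mul_of_nonneg_left (hB i k).1 (hx0 i.succ)
  have ht : (∑ i : Fin n, x i.succ * (0.9:ℝ)) = 0.9 * ∑ i : Fin n, x i.succ := by
    rw [← Finset.sum_mul]; ring
  have ht34 : (∑ i : Fin n, x i.succ * (3/4:ℝ)) = (3/4) * ∑ i : Fin n, x i.succ := by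
    rw [← Finset.sum_mul]; ring
  have hgap : (0.15 : ℝ) ≤ S k.succ - S 0 := by
    rw [hS0, hSk, ht34]
    have h1 : 0 ≤ x 0 * δ := mul_nonneg (hx0 0) hδ
    rw [ht] at hBsum
    nlinarith [hx0 0]
  have hy0z : y 0 = 0 := by
    have h2 : (0.15) * y 0 ≤ (S k.succ - S 0) * y 0 :=
      mul_le_mul_of_nonneg_right hgap (hy0 0)
    have h3 : S k.succ * y 0 - S 0 * y 0 ≤ 0 := by linarith [hdev]
    refine le_antisymm ?_ (hy0 0)
    nlinarith [h2, h3]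
  -- Step 2 : x 0 = 0
  set T : Fin (n+1) → ℝ := fun i => ∑ j, R1 A i j * y j with hTdef
  set x' : Fin (n+1) → ℝ :=
    fun i => x i + (if i = k.succ then x 0 else 0) - (if i = 0 then x 0 else 0) with hx'def
  have hx'mem : x' ∈ stdSimplex ℝ (Fin (n+1)) := by
    constructor
    · intro i
      rcases eq_or_ne i 0 with h0 | h0
      · subst h0; simp [hx'def, hk0]
      · rcases eq_or_ne i k.succ with h1 | h1
        · subst h1
          simp [hx'def, h0]
          linarith [hx0 k.succ, hx0 0]
        · simpa [hx'def, h0, h1] using hx0 i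
    · simp only [hx'def, Finset.sum_sub_distrib, Finset.sum_add_distrib,
        Finset.sum_ite_eq', Finset.mem_univ, if_true]
      linarith [hxs]
  have hdev2 := hRmax x' hx'mem
  rw [payoff_row, payoff_row] at hdev2
  have hexp2 : ∑ i, x' i * (∑ j, R1 A i j * y j)
      = (∑ i, x i * (∑ j, R1 A i j * y j)) + x 0 * T k.succ - x 0 * T 0 := by
    simp only [hx'def, add_mul, sub_mul, ite_mul, zero_mul,
      Finset.sum_add_distrib, Finset.sum_sub_distrib,
      Finset.sum_ite_eq', Finset.mem_univ, if_true, hTdef]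
  rw [hexp2] at hdev2
  have hT0 : T 0 = 0 := by simp [hTdef, R1]
  have hysum' : ∑ j : Fin n, y j.succ = 1 := by linarith [hysum]
  have hTk : T k.succ = ∑ j : Fin n, A k j * y j.succ := by
    simp [hTdef, R1, Fin.sum_univ_succ, hy0z]
  have hTklb : (0.9:ℝ) ≤ T k.succ := by
    rw [hTk]
    calc (0.9:ℝ) = ∑ j : Fin n, (0.9:ℝ) * y j.succ := by
          rw [← Finset.mul_sum, hysum', mul_one]
      _ ≤ ∑ j : Fin n, A k j * y j.succ :=
          Finset.sum_le_sum fun j _ => mul_le_mul_of_nonneg_right (hA k j).1 (hy0 j.succ)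
  have hx0z : x 0 = 0 := by
    rw [hT0, mul_zero] at hdev2
    have h3 : x 0 * T k.succ ≤ 0 := by linarith [hdev2]
    refine le_antisymm ?_ (hx0 0)
    nlinarith [h3, hTklb]
  refine ⟨hx0z, hy0z, ⟨?_, ?_⟩, ⟨?_, ?_⟩, ?_, ?_⟩
  · intro i; exact hx0 i.succ
  · linarith [hxsum]
  · intro j; exact hy0 j.succ
  · linarith [hysum]
  · -- row maximality
    intro x'' hx''
    set X : Fin (n+1) → ℝ := fun i => Fin.cases 0 x'' i with hXdef
    have hX0 : X 0 = 0 := rfl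
    have hXmem : X ∈ stdSimplex ℝ (Fin (n+1)) := by
      constructor
      · intro i
        induction i using Fin.cases with
        | zero => simp [hXdef]
        | succ i => simpa [hXdef] using hx''.1 i
      · rw [Fin.sum_univ_succ]
        simpa [hXdef] using hx''.2
    have h1 := hRmax X hXmem
    rw [payoff_restrict (R1 A) X y hX0 hy0z, payoff_restrict (R1 A) x y hx0z hy0z,
      R1_succ_succ] at h1
    have hXs : (fun i : Fin n => X i.succ) = x'' := by funext i; simp [hXdef]
    rwa [hXs] at h1
  · -- column maximality
    intro y'' hy''
    set Y : Fin (n+1) → ℝ := fun j => Fin.cases 0 y'' j with hYdef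
    have hY0 : Y 0 = 0 := rfl
    have hYmem : Y ∈ stdSimplex ℝ (Fin (n+1)) := by
      constructor
      · intro j
        induction j using Fin.cases with
        | zero => simp [hYdef]
        | succ j => simpa [hYdef] using hy''.1 j
      · rw [Fin.sum_univ_succ]
        simpa [hYdef] using hy''.2
    have h1 := hCmax Y hYmem
    rw [payoff_restrict (C1 B k δ) x Y hx0z hY0, payoff_restrict (C1 B k δ) x y hx0z hy0z,
      C1_succ_succ] at h1
    have hYs : (fun j : Fin n => Y j.succ) = y'' := by funext j; simp [hYdef]
    rwa [hYs] at h1
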